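/- Let $e$ be a unit vector in $\mathbb{R}^d$ and $A_1, A_2$ two real symmetric positive definite $d \times d$ matrices with $A_2 - A_1$ positive definite. Then for every nonzero vector $\xi$ orthogonal to $e$, one has $\langle A_2 e, e\rangle \langle A_2 \xi, \xi\rangle - \langle A_2 e, \xi\rangle^2 > \langle A_1 e, e\rangle \langle A_1 \xi, \xi\rangle - \langle A_1 e, \xi\rangle^2$. -/

import Mathlib

open Matrix

lemma aux_pos {d : ℕ} (A : Matrix (Fin d) (Fin d) ℝ) (hA : A.PosDef)
    (x : Fin d → ℝ) (hx : x ≠ 0) : 0 < A.mulVec x ⬝ᵥ x := by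
  have := hA.dotProduct_mulVec_pos hx
  simp at this
  rw [dotProduct_comm]
  exact this

lemma aux_symm {d : ℕ} (A : Matrix (Fin d) (Fin d) ℝ) (hA : A.IsHermitian)
    (x y : Fin d → ℝ) : x ⬝ᵥ A.mulVec y = A.mulVec x ⬝ᵥ y := by
  have h : Aᵀ = A := by simpa [Matrix.IsHermitian] using hA
  rw [dotProduct_mulVec, ← mulVec_transpose, h]

lemma aux_cauchy {d : ℕ} (e ξ : Fin d → ℝ) (he : e ⬝ᵥ e = 1)
    (A : Matrix (Fin d) (Fin d) ℝ) (hA : A.PosDef)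
    (hξ : ξ ≠ 0) (horth : ξ ⬝ᵥ e = 0) :
    (A.mulVec e ⬝ᵥ ξ) ^ 2 < (A.mulVec e ⬝ᵥ e) * (A.mulVec ξ ⬝ᵥ ξ) := by
  set a := A.mulVec e ⬝ᵥ e with ha_def
  set b := A.mulVec ξ ⬝ᵥ ξ with hb_def
  set c := A.mulVec e ⬝ᵥ ξ with hc_def
  have hb : 0 < b := aux_pos A hA ξ hξ
  have hw : (b • e - c • ξ) ≠ 0 := by
    intro h0
    have : (b • e - c • ξ) ⬝ᵥ e = 0 := by rw [h0]; simp
    rw [sub_dotProduct, smul_dotProduct, smul_dotProduct, he, horth] at this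
    simp at this
    linarith
  have hq := aux_pos A hA _ hw
  have hsymm : A.mulVec ξ ⬝ᵥ e = c := by
    rw [dotProduct_comm, aux_symm A hA.1]
  simp only [Matrix.mulVec_sub, Matrix.mulVec_smul, dotProduct_sub, sub_dotProduct,
    dotProduct_smul, smul_dotProduct, smul_eq_mul, hsymm, ← ha_def, ← hb_def, ← hc_def] at hq
  nlinarith [hq, hb]

theorem stmt0 {d : ℕ} (hd : 2 ≤ d) (e : Fin d → ℝ) (he : e ⬝ᵥ e = 1)
    (A1 A2 : Matrix (Fin d) (Fin d) ℝ)
    (hA1 : A1.PosDef) (hA2 : A2.PosDef) (hdiff : (A2 - A1).PosDef) :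
    ∀ ξ : Fin d → ℝ, ξ ≠ 0 → ξ ⬝ᵥ e = 0 →
      (A1.mulVec e ⬝ᵥ e) * (A1.mulVec ξ ⬝ᵥ ξ) - (A1.mulVec e ⬝ᵥ ξ) ^ 2 <
      (A2.mulVec e ⬝ᵥ e) * (A2.mulVec ξ ⬝ᵥ ξ) - (A2.mulVec e ⬝ᵥ ξ) ^ 2 := by
  intro ξ hξ horth
  have hene : e ≠ 0 := by
    intro h0; rw [h0] at he; simp at he
  set a := A1.mulVec e ⬝ᵥ e
  set b := A1.mulVec ξ ⬝ᵥ ξ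
  set c := A1.mulVec e ⬝ᵥ ξ
  set p := (A2 - A1).mulVec e ⬝ᵥ e with hp_def
  set q := (A2 - A1).mulVec ξ ⬝ᵥ ξ with hq_def
  set r := (A2 - A1).mulVec e ⬝ᵥ ξ with hr_def
  have ha : 0 < a := aux_pos A1 hA1 e hene
  have hb : 0 < b := aux_pos A1 hA1 ξ hξ
  have hp : 0 < p := aux_pos _ hdiff e hene
  have hq : 0 < q := aux_pos _ hdiff ξ hξ
  have hab : c ^ 2 < a * b := aux_cauchy e ξ he A1 hA1 hξ horth
  have hpq : r ^ 2 < p * q := aux_cauchy e ξ he _ hdiff hξ horth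
  have hee : A2.mulVec e ⬝ᵥ e = a + p := by
    rw [hp_def, Matrix.sub_mulVec, sub_dotProduct]; ring
  have hxx : A2.mulVec ξ ⬝ᵥ ξ = b + q := by
    rw [hq_def, Matrix.sub_mulVec, sub_dotProduct]; ring
  have hex : A2.mulVec e ⬝ᵥ ξ = c + r := by
    rw [hr_def, Matrix.sub_mulVec, sub_dotProduct]; ring
  rw [hee, hxx, hex]
  -- goal : a*b - c^2 < (a+p)*(b+q) - (c+r)^2
  rcases le_or_gt (c * r) 0 with hcr | hcr
  · nlinarith [mul_pos ha hq, mul_pos hb hp]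
  · have habpq : c ^ 2 * r ^ 2 < (a * b) * (p * q) := by
      nlinarith [mul_pos (sub_pos.mpr hab) (sub_pos.mpr hpq), sq_nonneg c, sq_nonneg r,
        mul_nonneg (sq_nonneg c) (sub_pos.mpr hpq).le,
        mul_nonneg (sq_nonneg r) (sub_pos.mpr hab).le]
    have h2 : (2 * (c * r)) ^ 2 < (a * q + b * p) ^ 2 := by
      nlinarith [sq_nonneg (a * q - b * p), habpq]
    have h3 : 2 * (c * r) < a * q + b * p := by
      have hnn : 0 ≤ a * q + b * p := by positivity
      exact lt_of_pow_lt_pow_left₀ 2 hnn h2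
    nlinarith [h3, hpq]
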